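/- There exists an absolute constant C > 0 with the following property. Let p ≥ 5 be a prime, n ≥ 1 an integer, k ≥ 1 an integer, and y a real number with y ≥ 3. Then the number of pairs (x,d) of positive integers with 3x² + 4p^{2n+1} = d²k and d²k ≤ y is at most C·(log y)². -/
import Mathlib


open Finset
set_option maxHeartbeats 1000000 in
lemma growth_lemma (K L L₀ N X D X' D' : ℤ)
    (hK : 1 ≤ K) (hL : 1 ≤ L) (hL₀ : 1 ≤ L₀) (hN : 1 ≤ N)
    (hco : 3 * N ^ 2 ≤ 16 * L * L₀ ^ 2 * K)
    (h1 : K * D ^ 2 = L * X ^ 2 + N) (h2 : K * D' ^ 2 = L * X' ^ 2 + N)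
    (hD : D < D') (hX : 0 ≤ X) (hX' : 1 ≤ X') (hD1 : 1 ≤ D)
    (hdvd : L₀ ∣ (D * X' - X * D')) : 19 * D ^ 2 ≤ 16 * D' ^ 2 := by
  set v := D * X' - X * D' with hv
  set w := D * X' + X * D' with hw
  have hD'1 : 1 ≤ D' := by linarith
  have hDD : D ^ 2 < D' ^ 2 := by nlinarith
  have hid : L * (v * w) = N * (D' ^ 2 - D ^ 2) := by
    rw [hv, hw]; linear_combination D' ^ 2 * h1 - D ^ 2 * h2
  have hwpos : 1 ≤ w := by nlinarith
  have hvw : 0 < v * w := by nlinarith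
  have hvpos : 0 < v := by
    by_contra h
    push_neg at h
    nlinarith
  have hvL : L₀ ≤ v := Int.le_of_dvd hvpos hdvd
  have hDXw : D * X' ≤ w := by nlinarith
  have hDXpos : 0 < D * X' := by positivity
  have s0 : L₀ * (D * X') ≤ v * w := by
    apply mul_le_mul hvL hDXw (le_of_lt hDXpos) (by linarith)
  have s1 : L * (L₀ * (D * X')) ≤ N * (D' ^ 2 - D ^ 2) := by
    calc L * (L₀ * (D * X')) ≤ L * (v * w) := by
          exact mul_le_mul_of_nonneg_left s0 (by linarith)
      _ = N * (D' ^ 2 - D ^ 2) := hid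
  have s2 : (L * (L₀ * (D * X'))) ^ 2 ≤ (N * (D' ^ 2 - D ^ 2)) ^ 2 := by
    apply pow_le_pow_left₀ (by positivity) s1
  have s3 : K * (D' ^ 2 - D ^ 2) ≤ L * X' ^ 2 := by nlinarith [sq_nonneg X]
  have s4 : (L * L₀ ^ 2 * K * D ^ 2) * (D' ^ 2 - D ^ 2) ≤ (N * (D' ^ 2 - D ^ 2)) ^ 2 := by
    have h5 : (L * L₀ ^ 2 * D ^ 2) * (K * (D' ^ 2 - D ^ 2)) ≤ (L * L₀ ^ 2 * D ^ 2) * (L * X' ^ 2) :=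
      mul_le_mul_of_nonneg_left s3 (by positivity)
    calc (L * L₀ ^ 2 * K * D ^ 2) * (D' ^ 2 - D ^ 2)
        = (L * L₀ ^ 2 * D ^ 2) * (K * (D' ^ 2 - D ^ 2)) := by ring
      _ ≤ (L * L₀ ^ 2 * D ^ 2) * (L * X' ^ 2) := h5
      _ = (L * (L₀ * (D * X'))) ^ 2 := by ring
      _ ≤ (N * (D' ^ 2 - D ^ 2)) ^ 2 := s2
  have s4' : (L * L₀ ^ 2 * K * D ^ 2) * (D' ^ 2 - D ^ 2) ≤ (N ^ 2 * (D' ^ 2 - D ^ 2)) * (D' ^ 2 - D ^ 2) := by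
    have he : (N * (D' ^ 2 - D ^ 2)) ^ 2 = (N ^ 2 * (D' ^ 2 - D ^ 2)) * (D' ^ 2 - D ^ 2) := by ring
    linarith [s4, he.le, he.ge]
  have s5 : L * L₀ ^ 2 * K * D ^ 2 ≤ N ^ 2 * (D' ^ 2 - D ^ 2) :=
    le_of_mul_le_mul_right s4' (by linarith)
  have hcoD := mul_le_mul_of_nonneg_right hco (sq_nonneg D)
  have hN2 : 1 ≤ N ^ 2 := by
    calc (1:ℤ) = 1 ^ 2 := by norm_num
      _ ≤ N ^ 2 := pow_le_pow_left₀ zero_le_one hN 2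
  by_contra hfin
  push_neg at hfin
  nlinarith [s5, hcoD, hN2, hfin,
    mul_nonneg (sub_nonneg.mpr hN2) (by linarith : (0:ℤ) ≤ 19 * D ^ 2 - 16 * D' ^ 2)]

lemma chain_nat : ∀ (r : ℕ) (F : Finset ℕ), F.card = r → F.Nonempty →
    (∀ a ∈ F, 1 ≤ a) → (∀ a ∈ F, ∀ b ∈ F, a < b → 19 * a ^ 2 ≤ 16 * b ^ 2) →
    ∃ a ∈ F, 19 ^ (r - 1) ≤ 16 ^ (r - 1) * a ^ 2 := by
  intro r
  induction r with
  | zero =>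
    intro F hc hne _ _
    exact absurd hc (by simpa using hne.card_pos.ne')
  | succ r ih =>
    intro F hc hne h1 hg
    rcases Nat.eq_zero_or_pos r with hr | hr
    · subst hr
      obtain ⟨a, ha⟩ := hne
      exact ⟨a, ha, by simpa using Nat.one_le_pow 2 a (h1 a ha)⟩
    · have hmax := F.max'_mem hne
      set a := F.max' hne with hamax
      set F' := F.erase a with hF'
      have hc' : F'.card = r := by
        rw [hF', card_erase_of_mem hmax, hc]; omega
      have hne' : F'.Nonempty := by
        rw [← card_pos, hc']; exact hr
      obtain ⟨b, hbF', hb⟩ := ih F' hc' hne' (fun x hx => h1 x (mem_of_mem_erase hx))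
        (fun x hx z hz hlt => hg x (mem_of_mem_erase hx) z (mem_of_mem_erase hz) hlt)
      have hbF : b ∈ F := mem_of_mem_erase hbF'
      have hba : b < a := lt_of_le_of_ne (F.le_max' b hbF) (ne_of_mem_erase hbF')
      refine ⟨a, hmax, ?_⟩
      have hgrow := hg b hbF a hmax hba
      have : 19 ^ (r + 1 - 1) = 19 * 19 ^ (r - 1) := by
        rw [Nat.succ_sub_one, ← pow_succ']
        congr 1
        omega
      rw [this]
      have h16 : 16 ^ (r + 1 - 1) = 16 ^ (r - 1) * 16 := by
        rw [Nat.succ_sub_one, ← pow_succ]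
        congr 1
        omega
      rw [h16]
      calc 19 * 19 ^ (r - 1) ≤ 19 * (16 ^ (r - 1) * b ^ 2) := by
            exact Nat.mul_le_mul_left _ hb
        _ = 16 ^ (r - 1) * (19 * b ^ 2) := by ring
        _ ≤ 16 ^ (r - 1) * (16 * a ^ 2) := Nat.mul_le_mul_left _ hgrow
        _ = 16 ^ (r - 1) * 16 * a ^ 2 := by ring

lemma log_ge_one {y : ℝ} (hy : 3 ≤ y) : 1 ≤ Real.log y := by
  rw [Real.le_log_iff_exp_le (by linarith)]
  have := Real.exp_one_lt_d9
  linarith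

lemma log_five : (1 : ℝ) ≤ Real.log 5 := log_ge_one (by norm_num)

lemma log_1916 : (1 / 6 : ℝ) ≤ Real.log (19 / 16) := by
  have h6 : (1 : ℝ) ≤ Real.log ((19 / 16) ^ 6) := by
    rw [Real.le_log_iff_exp_le (by positivity)]
    have := Real.exp_one_lt_d9
    nlinarith
  rw [Real.log_pow] at h6
  push_cast at h6
  linarith

lemma chain_card (y : ℝ) (hy : 3 ≤ y) (F : Finset ℕ)
    (h1 : ∀ a ∈ F, 1 ≤ a) (hbd : ∀ a ∈ F, (a : ℝ) ^ 2 ≤ y)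
    (hgrow : ∀ a ∈ F, ∀ b ∈ F, a < b → 19 * a ^ 2 ≤ 16 * b ^ 2) :
    (F.card : ℝ) ≤ 8 * Real.log y := by
  have hly := log_ge_one hy
  rcases F.eq_empty_or_nonempty with h | hne
  · simp [h]; linarith
  obtain ⟨a, haF, ha⟩ := chain_nat F.card F rfl hne h1 hgrow
  set r := F.card with hr
  have hr1 : 1 ≤ r := hne.card_pos
  -- cast to ℝ
  have hc : (19 : ℝ) ^ (r - 1) ≤ 16 ^ (r - 1) * (a : ℝ) ^ 2 := by
    exact_mod_cast ha
  have hay : ((a : ℝ)) ^ 2 ≤ y := hbd a haF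
  have h19 : (19 / 16 : ℝ) ^ (r - 1) ≤ y := by
    rw [div_pow, div_le_iff₀ (by positivity)]
    calc (19 : ℝ) ^ (r - 1) ≤ 16 ^ (r - 1) * (a : ℝ) ^ 2 := hc
      _ ≤ 16 ^ (r - 1) * y := by
          apply mul_le_mul_of_nonneg_left hay (by positivity)
      _ = y * 16 ^ (r - 1) := by ring
  have hlog : ((r : ℝ) - 1) * Real.log (19 / 16) ≤ Real.log y := by
    have := Real.log_le_log (by positivity) h19
    rw [Real.log_pow] at this
    have hcast : ((r - 1 : ℕ) : ℝ) = (r : ℝ) - 1 := by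
      have : 1 ≤ r := hr1
      push_cast [Nat.cast_sub this]
      ring
    rw [hcast] at this
    exact this
  have hl6 := log_1916
  have hrr : (r : ℝ) - 1 ≤ 6 * Real.log y := by
    have hpos : (0 : ℝ) ≤ (r : ℝ) - 1 := by
      have : (1 : ℝ) ≤ (r : ℝ) := by exact_mod_cast hr1
      linarith
    nlinarith
  linarith

namespace Stmt14

def av (s : ℕ × ℕ) : ℕ := min (s.1.factorization 2) (s.2.factorization 2)
def bv (p : ℕ) (s : ℕ × ℕ) : ℕ := min (s.1.factorization p) (s.2.factorization p)
def ev (p n : ℕ) (s : ℕ × ℕ) : ℕ := 2 * n + 1 - 2 * bv p s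
def tv (p k : ℕ) : ℕ := k.factorization p
def cv (p n k : ℕ) (s : ℕ × ℕ) : ℕ :=
  if ev p n s = tv p k then (tv p k + 1) / 2 else tv p k / 2
def gv (p : ℕ) (s : ℕ × ℕ) : ℕ := 2 ^ av s * p ^ bv p s
def Dv (p : ℕ) (s : ℕ × ℕ) : ℕ := s.2 / gv p s
def Xv (p n k : ℕ) (s : ℕ × ℕ) : ℕ := s.1 / (gv p s * p ^ cv p n k s)
def Kv (p k : ℕ) : ℕ := k / p ^ tv p k

lemma key_struct (p n k x d : ℕ) (hp : p.Prime) (hp5 : 5 ≤ p) (hk : 1 ≤ k)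
    (hx : 1 ≤ x) (hd : 1 ≤ d) (heq : 3 * x ^ 2 + 4 * p ^ (2 * n + 1) = d ^ 2 * k) :
    av (x, d) ≤ 1 ∧ bv p (x, d) ≤ n ∧
    x = gv p (x, d) * p ^ cv p n k (x, d) * Xv p n k (x, d) ∧
    d = gv p (x, d) * Dv p (x, d) ∧
    1 ≤ Xv p n k (x, d) ∧ 1 ≤ Dv p (x, d) ∧ 1 ≤ Kv p k ∧
    ¬ p ∣ Dv p (x, d) ∧
    ((ev p n (x, d) = tv p k ∧
        Kv p k * (Dv p (x, d)) ^ 2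
          = 3 * p * (Xv p n k (x, d)) ^ 2 + 2 ^ (2 - 2 * av (x, d))) ∨
     (tv p k < ev p n (x, d) ∧ ¬ p ∣ Xv p n k (x, d) ∧
        Kv p k * (Dv p (x, d)) ^ 2
          = 3 * (Xv p n k (x, d)) ^ 2
              + 2 ^ (2 - 2 * av (x, d)) * p ^ (ev p n (x, d) - tv p k))) := by
  have hx0 : x ≠ 0 := by omega
  have hd0 : d ≠ 0 := by omega
  have hk0 : k ≠ 0 := by omega
  have hp1 : 1 < p := hp.one_lt
  have hppos : 0 < p := by omega
  set A := av (x, d) with hA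
  set B := bv p (x, d) with hB
  set t := tv p k with ht
  have hAdef : A = min (x.factorization 2) (d.factorization 2) := rfl
  have hBdef : B = min (x.factorization p) (d.factorization p) := rfl
  have h2x : 2 ^ A ∣ x := dvd_trans (pow_dvd_pow 2 (hAdef ▸ min_le_left _ _)) (Nat.ordProj_dvd x 2)
  have h2d : 2 ^ A ∣ d := dvd_trans (pow_dvd_pow 2 (hAdef ▸ min_le_right _ _)) (Nat.ordProj_dvd d 2)
  have hpx : p ^ B ∣ x := dvd_trans (pow_dvd_pow p (hBdef ▸ min_le_left _ _)) (Nat.ordProj_dvd x p)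
  have hpd : p ^ B ∣ d := dvd_trans (pow_dvd_pow p (hBdef ▸ min_le_right _ _)) (Nat.ordProj_dvd d p)
  -- A ≤ 1
  have hA1 : A ≤ 1 := by
    by_contra hA2
    push_neg at hA2
    have h4x : 2 ^ 2 ∣ x := dvd_trans (pow_dvd_pow 2 hA2) h2x
    have h4d : 2 ^ 2 ∣ d := dvd_trans (pow_dvd_pow 2 hA2) h2d
    have h16x : (16 : ℕ) ∣ 3 * x ^ 2 := by
      obtain ⟨c, hc⟩ := h4x
      exact ⟨3 * c ^ 2, by rw [hc]; ring⟩
    have h16d : (16 : ℕ) ∣ d ^ 2 * k := by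
      obtain ⟨c, hc⟩ := h4d
      exact ⟨c ^ 2 * k, by rw [hc]; ring⟩
    have h16m : (16 : ℕ) ∣ 4 * p ^ (2 * n + 1) := by
      have hsub : d ^ 2 * k - 3 * x ^ 2 = 4 * p ^ (2 * n + 1) := by omega
      rw [← hsub]
      exact Nat.dvd_sub h16d h16x
    have h4m : (4 : ℕ) ∣ p ^ (2 * n + 1) := by
      have : 4 * 4 ∣ 4 * p ^ (2 * n + 1) := by norm_num at h16m ⊢; exact h16m
      exact (mul_dvd_mul_iff_left (by norm_num : (4:ℕ) ≠ 0)).mp this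
    have h2m : (2 : ℕ) ∣ p ^ (2 * n + 1) := dvd_trans (by norm_num) h4m
    have := (Nat.prime_dvd_prime_iff_eq Nat.prime_two hp).mp (Nat.Prime.dvd_of_dvd_pow Nat.prime_two h2m)
    omega
  -- B ≤ n
  have hBn : B ≤ n := by
    by_contra hB2
    push_neg at hB2
    have hpnx : p ^ (n + 1) ∣ x := dvd_trans (pow_dvd_pow p hB2) hpx
    have hpnd : p ^ (n + 1) ∣ d := dvd_trans (pow_dvd_pow p hB2) hpd
    have hQx : p ^ (2 * n + 2) ∣ 3 * x ^ 2 := by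
      obtain ⟨c, hc⟩ := hpnx
      exact ⟨3 * c ^ 2, by rw [hc]; ring_nf⟩
    have hQd : p ^ (2 * n + 2) ∣ d ^ 2 * k := by
      obtain ⟨c, hc⟩ := hpnd
      exact ⟨c ^ 2 * k, by rw [hc]; ring_nf⟩
    have hQm : p ^ (2 * n + 2) ∣ 4 * p ^ (2 * n + 1) := by
      have hsub : d ^ 2 * k - 3 * x ^ 2 = 4 * p ^ (2 * n + 1) := by omega
      rw [← hsub]
      exact Nat.dvd_sub hQd hQx
    have hcop : Nat.Coprime (p ^ (2 * n + 2)) 4 := by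
      have h' : Nat.Coprime p 2 := (Nat.coprime_primes hp Nat.prime_two).mpr (by omega)
      have h4eq : (4 : ℕ) = 2 ^ 2 := rfl
      rw [h4eq]
      exact h'.pow _ _
    have hdvd : p ^ (2 * n + 2) ∣ p ^ (2 * n + 1) :=
      hcop.dvd_of_dvd_mul_left hQm
    have := (Nat.pow_dvd_pow_iff_le_right hp1).mp hdvd
    omega
  set e := ev p n (x, d) with he
  have hedef : e = 2 * n + 1 - 2 * B := rfl
  have he1 : 1 ≤ e := by omega
  have heodd : e % 2 = 1 := by omega
  -- gcd-type reduction
  set g := gv p (x, d) with hg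
  have hgdef : g = 2 ^ A * p ^ B := rfl
  have hcop2p : Nat.Coprime (2 ^ A) (p ^ B) :=
    ((Nat.coprime_primes Nat.prime_two hp).mpr (by omega)).pow A B
  have hgx : g ∣ x := hgdef ▸ hcop2p.mul_dvd_of_dvd_of_dvd h2x hpx
  have hgd : g ∣ d := hgdef ▸ hcop2p.mul_dvd_of_dvd_of_dvd h2d hpd
  have hg0 : 0 < g := by rw [hgdef]; positivity
  set D := Dv p (x, d) with hD
  have hdD : d = g * D := (Nat.mul_div_cancel' hgd).symm
  set Xg := x / g with hXg
  have hxXg : x = g * Xg := (Nat.mul_div_cancel' hgx).symm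
  have hD1 : 1 ≤ D := by
    rcases Nat.eq_zero_or_pos D with h | h
    · rw [h, mul_zero] at hdD; omega
    · exact h
  have hXg1 : 1 ≤ Xg := by
    rcases Nat.eq_zero_or_pos Xg with h | h
    · rw [h, mul_zero] at hxXg; omega
    · exact h
  have hXg0 : Xg ≠ 0 := by omega
  -- the reduced equation
  have hsplit : 4 * p ^ (2 * n + 1) = g ^ 2 * (2 ^ (2 - 2 * A) * p ^ e) := by
    have h4 : (4 : ℕ) = 2 ^ (2 * A) * 2 ^ (2 - 2 * A) := by
      interval_cases A <;> norm_num
    have hpe : p ^ (2 * n + 1) = p ^ (2 * B) * p ^ e := by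
      rw [← pow_add]
      congr 1
      omega
    rw [h4, hpe, hgdef]
    ring
  have redEq : 3 * Xg ^ 2 + 2 ^ (2 - 2 * A) * p ^ e = D ^ 2 * k := by
    apply Nat.eq_of_mul_eq_mul_left (show 0 < g ^ 2 by positivity)
    calc g ^ 2 * (3 * Xg ^ 2 + 2 ^ (2 - 2 * A) * p ^ e)
        = 3 * (g * Xg) ^ 2 + g ^ 2 * (2 ^ (2 - 2 * A) * p ^ e) := by ring
      _ = 3 * x ^ 2 + 4 * p ^ (2 * n + 1) := by rw [← hxXg, ← hsplit]
      _ = d ^ 2 * k := heq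
      _ = g ^ 2 * (D ^ 2 * k) := by rw [hdD]; ring
  -- not both divisible by p
  have hminp : ¬ (p ∣ Xg ∧ p ∣ D) := by
    rintro ⟨h1, h2⟩
    have hfx : B + 1 ≤ x.factorization p := by
      apply (Nat.Prime.pow_dvd_iff_le_factorization hp hx0).mp
      obtain ⟨c, hc⟩ := h1
      exact ⟨2 ^ A * c, by rw [hxXg, hc, hgdef, pow_succ]; ring⟩
    have hfd : B + 1 ≤ d.factorization p := by
      apply (Nat.Prime.pow_dvd_iff_le_factorization hp hd0).mp
      obtain ⟨c, hc⟩ := h2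
      exact ⟨2 ^ A * c, by rw [hdD, hc, hgdef, pow_succ]; ring⟩
    have : B + 1 ≤ B := by
      rw [hBdef]
      exact le_min hfx hfd
    omega
  have hpD : ¬ p ∣ D := by
    intro hDp
    have hXgp : ¬ p ∣ Xg := fun h => hminp ⟨h, hDp⟩
    have hpdk : p ∣ D ^ 2 * k := Dvd.dvd.mul_right (dvd_pow hDp (by norm_num)) k
    have hpM : p ∣ 2 ^ (2 - 2 * A) * p ^ e := Dvd.dvd.mul_left (dvd_pow_self p (by omega)) _
    have hp3Xg : p ∣ 3 * Xg ^ 2 := by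
      have hsub : D ^ 2 * k - 2 ^ (2 - 2 * A) * p ^ e = 3 * Xg ^ 2 :=
        Nat.sub_eq_of_eq_add redEq.symm
      rw [← hsub]
      exact Nat.dvd_sub hpdk hpM
    rcases (Nat.Prime.dvd_mul hp).mp hp3Xg with h | h
    · have := Nat.le_of_dvd (by norm_num) h; omega
    · exact hXgp (Nat.Prime.dvd_of_dvd_pow hp h)
  -- K
  set K := Kv p k with hKv
  have hkfact : k = p ^ t * K := (Nat.ordProj_mul_ordCompl_eq_self k p).symm
  have hK1 : 1 ≤ K := Nat.ordCompl_pos p hk0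
  have hMexact : ¬ p ^ (e + 1) ∣ 2 ^ (2 - 2 * A) * p ^ e := by
    intro h
    have h' : p ^ e * p ∣ p ^ e * 2 ^ (2 - 2 * A) := by
      rw [← pow_succ]
      rwa [mul_comm (2 ^ (2 - 2 * A))] at h
    have hpdvd2 : p ∣ 2 ^ (2 - 2 * A) :=
      (Nat.mul_dvd_mul_iff_left (pow_pos hppos e)).mp h'
    have := Nat.Prime.dvd_of_dvd_pow hp hpdvd2
    have := Nat.le_of_dvd (by norm_num) this
    omega
  -- t ≤ e
  have htdef : t = k.factorization p := rfl
  have hte : t ≤ e := by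
    by_contra h
    push_neg at h
    have hpek : p ^ e ∣ k :=
      dvd_trans (pow_dvd_pow p (show e ≤ k.factorization p by omega)) (Nat.ordProj_dvd k p)
    have hpe1k : p ^ (e + 1) ∣ k :=
      dvd_trans (pow_dvd_pow p (show e + 1 ≤ k.factorization p by omega)) (Nat.ordProj_dvd k p)
    have hpeM : p ^ e ∣ 2 ^ (2 - 2 * A) * p ^ e := Dvd.dvd.mul_left dvd_rfl _
    have hpe3Xg : p ^ e ∣ 3 * Xg ^ 2 := by
      have hsub : D ^ 2 * k - 2 ^ (2 - 2 * A) * p ^ e = 3 * Xg ^ 2 :=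
        Nat.sub_eq_of_eq_add redEq.symm
      rw [← hsub]
      exact Nat.dvd_sub (Dvd.dvd.mul_left hpek _) hpeM
    have hcop3 : Nat.Coprime (p ^ e) 3 :=
      Nat.Coprime.pow_left e ((Nat.coprime_primes hp Nat.prime_three).mpr (by omega))
    have hpeXg2 : p ^ e ∣ Xg ^ 2 := hcop3.dvd_of_dvd_mul_left hpe3Xg
    have hj : e ≤ 2 * Xg.factorization p := by
      have := (Nat.Prime.pow_dvd_iff_le_factorization hp (pow_ne_zero 2 hXg0)).mp hpeXg2
      rwa [Nat.factorization_pow, Finsupp.smul_apply, smul_eq_mul] at this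
    have hpe1Xg2 : p ^ (e + 1) ∣ Xg ^ 2 := by
      have h2j : e + 1 ≤ 2 * Xg.factorization p := by omega
      have hpj : p ^ (2 * Xg.factorization p) ∣ Xg ^ 2 := by
        apply (Nat.Prime.pow_dvd_iff_le_factorization hp (pow_ne_zero 2 hXg0)).mpr
        rw [Nat.factorization_pow, Finsupp.smul_apply, smul_eq_mul]
      exact dvd_trans (pow_dvd_pow p h2j) hpj
    have hpe1M : p ^ (e + 1) ∣ 2 ^ (2 - 2 * A) * p ^ e := by
      have hsub : D ^ 2 * k - 3 * Xg ^ 2 = 2 ^ (2 - 2 * A) * p ^ e :=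
        Nat.sub_eq_of_eq_add (by rw [← redEq]; ring)
      rw [← hsub]
      exact Nat.dvd_sub (Dvd.dvd.mul_left hpe1k _) (Dvd.dvd.mul_left hpe1Xg2 3)
    exact hMexact hpe1M
  by_cases hcase : e = t
  · -- special case : e = t
    have hpek : p ^ e ∣ k := by rw [hcase]; exact Nat.ordProj_dvd k p
    have hpe3Xg : p ^ e ∣ 3 * Xg ^ 2 := by
      have hsub : D ^ 2 * k - 2 ^ (2 - 2 * A) * p ^ e = 3 * Xg ^ 2 :=
        Nat.sub_eq_of_eq_add redEq.symm
      rw [← hsub]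
      exact Nat.dvd_sub (Dvd.dvd.mul_left hpek _) (Dvd.dvd.mul_left dvd_rfl _)
    have hcop3 : Nat.Coprime (p ^ e) 3 :=
      Nat.Coprime.pow_left e ((Nat.coprime_primes hp Nat.prime_three).mpr (by omega))
    have hpeXg2 : p ^ e ∣ Xg ^ 2 := hcop3.dvd_of_dvd_mul_left hpe3Xg
    have hj : e ≤ 2 * Xg.factorization p := by
      have := (Nat.Prime.pow_dvd_iff_le_factorization hp (pow_ne_zero 2 hXg0)).mp hpeXg2
      rwa [Nat.factorization_pow, Finsupp.smul_apply, smul_eq_mul] at this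
    have hcj : (e + 1) / 2 ≤ Xg.factorization p := by omega
    have hXgdvd : p ^ ((e + 1) / 2) ∣ Xg :=
      dvd_trans (pow_dvd_pow p hcj) (Nat.ordProj_dvd Xg p)
    set X := Xg / p ^ ((e + 1) / 2) with hXdef
    have hXgX : Xg = p ^ ((e + 1) / 2) * X := (Nat.mul_div_cancel' hXgdvd).symm
    have hX1 : 1 ≤ X := by
      rcases Nat.eq_zero_or_pos X with h | h
      · rw [h, mul_zero] at hXgX; omega
      · exact h
    have hcveq : cv p n k (x, d) = (e + 1) / 2 := by
      unfold cv
      rw [if_pos (show ev p n (x, d) = tv p k from hcase)]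
      rw [← ht, ← hcase]
    have hgvpos : 0 < gv p (x, d) := hg ▸ hg0
    have hXveq : Xv p n k (x, d) = X := by
      simp only [Xv, hcveq]
      apply Nat.div_eq_of_eq_mul_left (by positivity)
      rw [← hg]
      conv_lhs => rw [hxXg, hXgX]
      ring
    have hpow : p ^ ((e + 1) / 2) * p ^ ((e + 1) / 2) = p ^ e * p := by
      rw [← pow_add, ← pow_succ]
      congr 1
      omega
    have hmain : p ^ e * (3 * p * X ^ 2 + 2 ^ (2 - 2 * A)) = p ^ e * (D ^ 2 * K) := by
      calc p ^ e * (3 * p * X ^ 2 + 2 ^ (2 - 2 * A))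
          = 3 * ((p ^ e * p) * X ^ 2) + 2 ^ (2 - 2 * A) * p ^ e := by ring
        _ = 3 * ((p ^ ((e + 1) / 2) * p ^ ((e + 1) / 2)) * X ^ 2) + 2 ^ (2 - 2 * A) * p ^ e := by
            rw [hpow]
        _ = 3 * Xg ^ 2 + 2 ^ (2 - 2 * A) * p ^ e := by rw [hXgX]; ring
        _ = D ^ 2 * k := redEq
        _ = p ^ e * (D ^ 2 * K) := by rw [hkfact, ← hcase]; ring
    have heqn : 3 * p * X ^ 2 + 2 ^ (2 - 2 * A) = D ^ 2 * K :=
      Nat.eq_of_mul_eq_mul_left (pow_pos hppos e) hmain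
    refine ⟨hA1, hBn, ?_, hdD, ?_, hD1, hK1, hpD, Or.inl ⟨hcase, ?_⟩⟩
    · rw [hXveq, hcveq]
      conv_lhs => rw [hxXg, hXgX]
      ring
    · rw [hXveq]; exact hX1
    · rw [hXveq]
      calc K * D ^ 2 = D ^ 2 * K := mul_comm _ _
        _ = 3 * p * X ^ 2 + 2 ^ (2 - 2 * A) := heqn.symm
  · -- generic case : t < e
    have htlt : t < e := lt_of_le_of_ne hte (fun h => hcase h.symm)
    have hptk : p ^ t ∣ k := Nat.ordProj_dvd k p
    have hptM : p ^ t ∣ 2 ^ (2 - 2 * A) * p ^ e :=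
      Dvd.dvd.mul_left (pow_dvd_pow p hte) _
    have hpt3Xg : p ^ t ∣ 3 * Xg ^ 2 := by
      have hsub : D ^ 2 * k - 2 ^ (2 - 2 * A) * p ^ e = 3 * Xg ^ 2 :=
        Nat.sub_eq_of_eq_add redEq.symm
      rw [← hsub]
      exact Nat.dvd_sub (Dvd.dvd.mul_left hptk _) hptM
    have hcop3 : Nat.Coprime (p ^ t) 3 :=
      Nat.Coprime.pow_left t ((Nat.coprime_primes hp Nat.prime_three).mpr (by omega))
    have hptXg2 : p ^ t ∣ Xg ^ 2 := hcop3.dvd_of_dvd_mul_left hpt3Xg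
    have hjt : t ≤ 2 * Xg.factorization p := by
      have := (Nat.Prime.pow_dvd_iff_le_factorization hp (pow_ne_zero 2 hXg0)).mp hptXg2
      rwa [Nat.factorization_pow, Finsupp.smul_apply, smul_eq_mul] at this
    have h2jt : 2 * Xg.factorization p ≤ t := by
      by_contra h'
      push_neg at h'
      have hpt1Xg2 : p ^ (t + 1) ∣ Xg ^ 2 := by
        have hpj : p ^ (2 * Xg.factorization p) ∣ Xg ^ 2 := by
          apply (Nat.Prime.pow_dvd_iff_le_factorization hp (pow_ne_zero 2 hXg0)).mpr
          rw [Nat.factorization_pow, Finsupp.smul_apply, smul_eq_mul]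
        exact dvd_trans (pow_dvd_pow p (by omega)) hpj
      have hpt1M : p ^ (t + 1) ∣ 2 ^ (2 - 2 * A) * p ^ e :=
        Dvd.dvd.mul_left (pow_dvd_pow p (by omega)) _
      have hpt1dk : p ^ (t + 1) ∣ D ^ 2 * k := by
        rw [← redEq]
        exact dvd_add (Dvd.dvd.mul_left hpt1Xg2 3) hpt1M
      have hcopD : Nat.Coprime (p ^ (t + 1)) (D ^ 2) :=
        (hp.coprime_iff_not_dvd.mpr hpD).pow (t + 1) 2
      have hpt1k : p ^ (t + 1) ∣ k := hcopD.dvd_of_dvd_mul_left hpt1dk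
      have := (Nat.Prime.pow_dvd_iff_le_factorization hp hk0).mp hpt1k
      omega
    have ht2j : t = 2 * Xg.factorization p := le_antisymm hjt h2jt
    have hj2 : t / 2 = Xg.factorization p := by omega
    have hXgdvd : p ^ (t / 2) ∣ Xg := by
      rw [hj2]
      exact Nat.ordProj_dvd Xg p
    set X := Xg / p ^ (t / 2) with hXdef
    have hXgX : Xg = p ^ (t / 2) * X := (Nat.mul_div_cancel' hXgdvd).symm
    have hpX : ¬ p ∣ X := by
      rw [hXdef, hj2]
      exact Nat.not_dvd_ordCompl hp hXg0
    have hX1 : 1 ≤ X := by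
      rcases Nat.eq_zero_or_pos X with h | h
      · rw [h, mul_zero] at hXgX; omega
      · exact h
    have hcveq : cv p n k (x, d) = t / 2 := by
      unfold cv
      rw [if_neg (show ¬ ev p n (x, d) = tv p k from hcase)]
    have hgvpos : 0 < gv p (x, d) := hg ▸ hg0
    have hXveq : Xv p n k (x, d) = X := by
      simp only [Xv, hcveq]
      apply Nat.div_eq_of_eq_mul_left (by positivity)
      rw [← hg]
      conv_lhs => rw [hxXg, hXgX]
      ring
    have hpow2 : p ^ (t / 2) * p ^ (t / 2) = p ^ t := by
      rw [← pow_add]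
      congr 1
      omega
    have hpowet : p ^ t * p ^ (e - t) = p ^ e := by
      rw [← pow_add]
      congr 1
      omega
    have hmain : p ^ t * (3 * X ^ 2 + 2 ^ (2 - 2 * A) * p ^ (e - t)) = p ^ t * (D ^ 2 * K) := by
      calc p ^ t * (3 * X ^ 2 + 2 ^ (2 - 2 * A) * p ^ (e - t))
          = 3 * ((p ^ t) * X ^ 2) + 2 ^ (2 - 2 * A) * (p ^ t * p ^ (e - t)) := by ring
        _ = 3 * ((p ^ (t / 2) * p ^ (t / 2)) * X ^ 2) + 2 ^ (2 - 2 * A) * p ^ e := by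
            rw [hpow2, hpowet]
        _ = 3 * Xg ^ 2 + 2 ^ (2 - 2 * A) * p ^ e := by rw [hXgX]; ring
        _ = D ^ 2 * k := redEq
        _ = p ^ t * (D ^ 2 * K) := by rw [hkfact]; ring
    have heqn : 3 * X ^ 2 + 2 ^ (2 - 2 * A) * p ^ (e - t) = D ^ 2 * K :=
      Nat.eq_of_mul_eq_mul_left (pow_pos hppos t) hmain
    refine ⟨hA1, hBn, ?_, hdD, ?_, hD1, hK1, hpD, Or.inr ⟨htlt, ?_, ?_⟩⟩
    · rw [hXveq, hcveq]
      conv_lhs => rw [hxXg, hXgX]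
      ring
    · rw [hXveq]; exact hX1
    · rw [hXveq]; exact hpX
    · rw [hXveq]
      calc K * D ^ 2 = D ^ 2 * K := mul_comm _ _
        _ = 3 * X ^ 2 + 2 ^ (2 - 2 * A) * p ^ (e - t) := heqn.symm


lemma pair_cases (p : ℕ) (hp : p.Prime) (hp5 : 5 ≤ p) (K A E : ℕ) (hE : 1 ≤ E)
    (X D X' D' : ℕ) (hpX : ¬ p ∣ X) (hpX' : ¬ p ∣ X') (hpD : ¬ p ∣ D) (hpD' : ¬ p ∣ D')
    (h1 : K * D ^ 2 = 3 * X ^ 2 + 2 ^ A * p ^ E)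
    (h2 : K * D' ^ 2 = 3 * X' ^ 2 + 2 ^ A * p ^ E) :
    (p : ℤ) ^ E ∣ ((D : ℤ) * X' - X * D') ∨ (p : ℤ) ^ E ∣ ((D : ℤ) * X' + X * D') := by
  have hpI : Prime (p : ℤ) := Nat.prime_iff_prime_int.mp hp
  have h1' : (K : ℤ) * D ^ 2 = 3 * X ^ 2 + 2 ^ A * p ^ E := by exact_mod_cast h1
  have h2' : (K : ℤ) * D' ^ 2 = 3 * X' ^ 2 + 2 ^ A * p ^ E := by exact_mod_cast h2
  set v : ℤ := (D : ℤ) * X' - X * D' with hv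
  set w : ℤ := (D : ℤ) * X' + X * D' with hw
  have hid : 3 * (v * w) = 2 ^ A * p ^ E * ((D' : ℤ) ^ 2 - D ^ 2) := by
    rw [hv, hw]; linear_combination (D' : ℤ) ^ 2 * h1' - (D : ℤ) ^ 2 * h2'
  have hdvd3 : (p : ℤ) ^ E ∣ 3 * (v * w) := ⟨2 ^ A * ((D' : ℤ) ^ 2 - D ^ 2), by linarith [hid]⟩
  have hp3 : ¬ (p : ℤ) ∣ 3 := by
    intro h
    have h' : p ∣ 3 := by exact_mod_cast h
    have := Nat.le_of_dvd (by norm_num) h'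
    omega
  have hco3 : IsCoprime ((p : ℤ) ^ E) 3 :=
    (IsCoprime.pow_left ((hpI.coprime_iff_not_dvd).mpr hp3))
  have hdvd : (p : ℤ) ^ E ∣ v * w := hco3.dvd_of_dvd_mul_right (by rwa [mul_comm] at hdvd3)
  have hnotboth : ¬ ((p : ℤ) ∣ v ∧ (p : ℤ) ∣ w) := by
    rintro ⟨hpv, hpw⟩
    have hsum : (p : ℤ) ∣ 2 * (D * X') := by
      have : v + w = 2 * ((D : ℤ) * X') := by rw [hv, hw]; ring
      rw [← this]; exact dvd_add hpv hpw
    have hp2 : ¬ (p : ℤ) ∣ 2 := by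
      intro h
      have h' : p ∣ 2 := by exact_mod_cast h
      have := Nat.le_of_dvd (by norm_num) h'
      omega
    rcases hpI.dvd_mul.mp hsum with h | h
    · exact hp2 h
    rcases hpI.dvd_mul.mp h with h | h
    · exact hpD (by exact_mod_cast h)
    · exact hpX' (by exact_mod_cast h)
  by_cases hcase : (p : ℤ) ∣ v
  · left
    have hpw : ¬ (p : ℤ) ∣ w := fun h => hnotboth ⟨hcase, h⟩
    have : IsCoprime ((p : ℤ) ^ E) w := IsCoprime.pow_left ((hpI.coprime_iff_not_dvd).mpr hpw)
    exact this.dvd_of_dvd_mul_right hdvd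
  · right
    have : IsCoprime ((p : ℤ) ^ E) v := IsCoprime.pow_left ((hpI.coprime_iff_not_dvd).mpr hcase)
    exact this.dvd_of_dvd_mul_left hdvd

end Stmt14

lemma helper_3p (P : ℤ) (h5 : 5 ≤ P) : (1 : ℤ) ≤ 3 * P := by linarith

lemma helper_co_special (P K c : ℤ) (h5 : 5 ≤ P) (hK : 1 ≤ K) (hc1 : 1 ≤ c) (hc2 : c ≤ 4) :
    3 * c ^ 2 ≤ 16 * (3 * P) * 1 ^ 2 * K := by nlinarith

lemma helper_co_generic (K c q : ℤ) (hK : 1 ≤ K) (hc1 : 1 ≤ c) (hc2 : c ≤ 4) (hq0 : 0 ≤ q) :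
    3 * (c * q) ^ 2 ≤ 16 * 3 * q ^ 2 * K := by
  have hc16 : c ^ 2 ≤ 16 := by nlinarith
  nlinarith [mul_nonneg (sub_nonneg.mpr hc16) (sq_nonneg q),
    mul_nonneg (sub_nonneg.mpr hK) (sq_nonneg q)]

lemma helper_one_le_mul (c q : ℤ) (hc1 : 1 ≤ c) (hq1 : 1 ≤ q) : 1 ≤ c * q := by nlinarith

lemma helper_d2k (a kk : ℝ) (hk : 1 ≤ kk) : a ^ 2 ≤ a ^ 2 * kk := by nlinarith [sq_nonneg a]

lemma helper_nlog (u v L : ℝ) (h1 : u * v ≤ L) (h2 : 1 ≤ v) (hu : 1 ≤ u) : u ≤ L := by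
  nlinarith
set_option maxHeartbeats 4000000 in
open Stmt14 in
/-- There is an absolute constant `C > 0` such that for every prime `p ≥ 5`, every
`n ≥ 1`, every `k ≥ 1` and every real `y ≥ 3`, the number of pairs `(x,d)` of positive
integers with `3x² + 4p^{2n+1} = d²k ≤ y` is at most `C·(log y)²`. -/
theorem stmt_14 :
    ∃ C : ℝ, 0 < C ∧
      ∀ (p n k : ℕ) (y : ℝ), p.Prime → 5 ≤ p → 1 ≤ n → 1 ≤ k → 3 ≤ y →
        (Nat.card {xd : ℕ × ℕ // 1 ≤ xd.1 ∧ 1 ≤ xd.2 ∧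
            3 * xd.1 ^ 2 + 4 * p ^ (2 * n + 1) = xd.2 ^ 2 * k ∧
            ((xd.2 ^ 2 * k : ℕ) : ℝ) ≤ y} : ℝ) ≤ C * Real.log y ^ 2 := by
  classical
  refine ⟨100, by norm_num, ?_⟩
  intro p n k y hp hp5 hn hk hy
  have hly : 1 ≤ Real.log y := log_ge_one hy
  set P : ℕ × ℕ → Prop := fun s => 1 ≤ s.1 ∧ 1 ≤ s.2 ∧
      3 * s.1 ^ 2 + 4 * p ^ (2 * n + 1) = s.2 ^ 2 * k ∧ ((s.2 ^ 2 * k : ℕ) : ℝ) ≤ y with hPdef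
  set T : Finset (ℕ × ℕ) :=
    (range (Nat.ceil y + 1) ×ˢ range (Nat.ceil y + 1)).filter P with hTdef
  -- bounds for members
  have hmemT : ∀ s, P s → s ∈ T := by
    intro s hs
    obtain ⟨h1, h2, h3, h4⟩ := hs
    have hcy : ((s.2 ^ 2 * k : ℕ) : ℝ) ≤ ((Nat.ceil y : ℕ) : ℝ) := h4.trans (Nat.le_ceil y)
    have hk' : s.2 ^ 2 * k ≤ Nat.ceil y := by exact_mod_cast hcy
    have hd2 : s.2 ≤ s.2 ^ 2 := Nat.le_self_pow (by norm_num) s.2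
    have hd2k : s.2 ^ 2 ≤ s.2 ^ 2 * k := Nat.le_mul_of_pos_right _ (by omega)
    have hx2 : s.1 ≤ s.1 ^ 2 := Nat.le_self_pow (by norm_num) s.1
    rw [hTdef, mem_filter, mem_product, mem_range, mem_range]
    refine ⟨⟨by omega, by omega⟩, h1, h2, h3, h4⟩
  have hTmem : ∀ s ∈ T, P s := by
    intro s hs
    exact (mem_filter.mp hs).2
  -- identify the cardinality
  have hcardT : Nat.card {xd : ℕ × ℕ // P xd} = T.card := by
    have hset : {xd : ℕ × ℕ | P xd} = (↑T : Set (ℕ × ℕ)) := by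
      ext s
      simp only [Set.mem_setOf_eq, mem_coe]
      exact ⟨hmemT s, hTmem s⟩
    calc Nat.card {xd : ℕ × ℕ // P xd} = {xd : ℕ × ℕ | P xd}.ncard :=
          (Nat.card_coe_set_eq _)
      _ = (↑T : Set (ℕ × ℕ)).ncard := by rw [hset]
      _ = T.card := Set.ncard_coe_finset T
  have hgoal : (T.card : ℝ) ≤ 100 * Real.log y ^ 2 := by
    rcases T.eq_empty_or_nonempty with hTe | hTne
    · rw [hTe]
      simp
      positivity
    -- n + 1 ≤ log y
    have hnlog : ((n : ℝ) + 1) ≤ Real.log y := by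
      obtain ⟨s, hsT⟩ := hTne
      obtain ⟨h1, h2, h3, h4⟩ := hTmem s hsT
      have h4m : ((4 * p ^ (2 * n + 1) : ℕ) : ℝ) ≤ y := by
        have hle : (4 * p ^ (2 * n + 1) : ℕ) ≤ s.2 ^ 2 * k := by omega
        calc ((4 * p ^ (2 * n + 1) : ℕ) : ℝ) ≤ ((s.2 ^ 2 * k : ℕ) : ℝ) := by exact_mod_cast hle
          _ ≤ y := h4
      have h5y : (5 : ℝ) ^ (2 * n + 1) ≤ y := by
        calc (5 : ℝ) ^ (2 * n + 1) ≤ (p : ℝ) ^ (2 * n + 1) := by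
              apply pow_le_pow_left₀ (by norm_num)
              exact_mod_cast hp5
          _ ≤ ((4 * p ^ (2 * n + 1) : ℕ) : ℝ) := by
              push_cast
              nlinarith [pow_nonneg (show (0:ℝ) ≤ (p:ℝ) by positivity) (2 * n + 1)]
          _ ≤ y := h4m
      have hlog5y : ((2 * n + 1 : ℕ) : ℝ) * Real.log 5 ≤ Real.log y := by
        have := Real.log_le_log (by positivity) h5y
        rwa [Real.log_pow] at this
      have hl5 := log_five
      push_cast at hlog5y
      nlinarith [hlog5y, hl5]
    -- classification
    set Grp : ℕ × ℕ → Finset (ℕ × ℕ) :=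
      fun s => T.filter (fun u => av u = av s ∧ bv p u = bv p s) with hGrpDef
    set d0 : ℕ × ℕ → ℕ := fun s =>
      if h : ((Grp s).image Prod.snd).Nonempty then ((Grp s).image Prod.snd).min' h else 1
      with hd0def
    set x0 : ℕ × ℕ → ℕ := fun s =>
      Nat.sqrt ((d0 s ^ 2 * k - 4 * p ^ (2 * n + 1)) / 3) with hx0def
    set tag : ℕ × ℕ → ℕ := fun s =>
      if ev p n s = tv p k then 0
      else if (p : ℤ) ^ (ev p n s - tv p k) ∣
          ((Dv p (x0 s, d0 s) : ℤ) * (Xv p n k s : ℤ)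
            - (Xv p n k (x0 s, d0 s) : ℤ) * (Dv p s : ℤ)) then 2 else 3 with htagdef
    set Φ : ℕ × ℕ → ℕ × ℕ × ℕ := fun s => (av s, bv p s, tag s) with hPhidef
    -- growth within classes
    have hs0mem : ∀ s ∈ T, (x0 s, d0 s) ∈ Grp s := by
      intro s hsT
      have hself : s ∈ Grp s := by
        rw [hGrpDef]
        exact mem_filter.mpr ⟨hsT, rfl, rfl⟩
      have hne : ((Grp s).image Prod.snd).Nonempty := ⟨s.2, mem_image_of_mem _ hself⟩
      have hd0eq : d0 s = ((Grp s).image Prod.snd).min' hne := by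
        rw [hd0def]
        exact dif_pos hne
      have hmin : d0 s ∈ (Grp s).image Prod.snd := by
        rw [hd0eq]; exact min'_mem _ _
      obtain ⟨u, huG, hu2⟩ := mem_image.mp hmin
      have huT : u ∈ T := by
        rw [hGrpDef] at huG
        exact mem_of_mem_filter u huG
      obtain ⟨hu1p, hu2p, hueq, -⟩ := hTmem u huT
      have hx0eq : x0 s = u.1 := by
        rw [hx0def]
        dsimp only
        rw [hu2] at hueq
        have hsub : d0 s ^ 2 * k - 4 * p ^ (2 * n + 1) = 3 * u.1 ^ 2 := by omega
        rw [hsub, Nat.mul_div_cancel_left _ (by norm_num : 0 < 3), pow_two]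
        exact Nat.sqrt_eq u.1
      have : (x0 s, d0 s) = u := by rw [hx0eq, ← hu2]
      rw [this]
      exact huG
    have hgrow : ∀ s ∈ T, ∀ s' ∈ T, Φ s = Φ s' → s.2 < s'.2 →
        19 * s.2 ^ 2 ≤ 16 * s'.2 ^ 2 := by
      intro s hsT s' hs'T hΦeq hlt
      obtain ⟨x, d⟩ := s
      obtain ⟨x', d'⟩ := s'
      simp only [hPhidef, Prod.mk.injEq] at hΦeq
      obtain ⟨hav, hbv, htageq⟩ := hΦeq
      obtain ⟨h1, h2, h3, h4⟩ := hTmem (x, d) hsT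
      obtain ⟨h1', h2', h3', h4'⟩ := hTmem (x', d') hs'T
      obtain ⟨hA1, hBn, hxeq, hdeq, hX1, hD1, hK1, hpD, hdisj⟩ :=
        key_struct p n k x d hp hp5 hk h1 h2 h3
      obtain ⟨hA1', hBn', hxeq', hdeq', hX1', hD1', hK1', hpD', hdisj'⟩ :=
        key_struct p n k x' d' hp hp5 hk h1' h2' h3'
      have hgEq : gv p (x, d) = gv p (x', d') := by
        unfold gv
        rw [hav, hbv]
      have hevEq : ev p n (x', d') = ev p n (x, d) := by
        unfold ev
        rw [hbv]
      have havEq : av (x', d') = av (x, d) := hav.symm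
      show 19 * d ^ 2 ≤ 16 * d' ^ 2
      have hDlt : Dv p (x, d) < Dv p (x', d') := by
        have hh : d < d' := hlt
        rw [hdeq, hdeq', ← hgEq] at hh
        exact lt_of_mul_lt_mul_left hh (Nat.zero_le _)
      have hfinish : 19 * Dv p (x, d) ^ 2 ≤ 16 * Dv p (x', d') ^ 2 →
          19 * d ^ 2 ≤ 16 * d' ^ 2 := by
        intro h
        rw [hdeq, hdeq', ← hgEq]
        calc 19 * (gv p (x, d) * Dv p (x, d)) ^ 2
            = gv p (x, d) ^ 2 * (19 * Dv p (x, d) ^ 2) := by ring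
          _ ≤ gv p (x, d) ^ 2 * (16 * Dv p (x', d') ^ 2) := Nat.mul_le_mul_left _ h
          _ = 16 * (gv p (x, d) * Dv p (x', d')) ^ 2 := by ring
      -- casts
      have hp5Z : (5 : ℤ) ≤ (p : ℤ) := by exact_mod_cast hp5
      have hKZ : (1 : ℤ) ≤ (Kv p k : ℤ) := by exact_mod_cast hK1
      have hDZlt : (Dv p (x, d) : ℤ) < (Dv p (x', d') : ℤ) := by exact_mod_cast hDlt
      have hXZ : (0 : ℤ) ≤ (Xv p n k (x, d) : ℤ) := by positivity
      have hXZ' : (1 : ℤ) ≤ (Xv p n k (x', d') : ℤ) := by exact_mod_cast hX1'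
      have hDZ1 : (1 : ℤ) ≤ (Dv p (x, d) : ℤ) := by exact_mod_cast hD1
      have hc2 : (2 : ℤ) ^ (2 - 2 * av (x, d)) ≤ 4 := by
        have : (2 : ℤ) ^ (2 - 2 * av (x, d)) ≤ 2 ^ 2 :=
          pow_le_pow_right₀ one_le_two (by omega)
        linarith [this]
      have hc1 : (1 : ℤ) ≤ (2 : ℤ) ^ (2 - 2 * av (x, d)) := by
        calc (1 : ℤ) = 1 ^ (2 - 2 * av (x, d)) := (one_pow _).symm
          _ ≤ 2 ^ (2 - 2 * av (x, d)) := pow_le_pow_left₀ zero_le_one one_le_two _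
      by_cases hc : ev p n (x, d) = tv p k
      · -- special case
        have heqn : Kv p k * Dv p (x, d) ^ 2
            = 3 * p * Xv p n k (x, d) ^ 2 + 2 ^ (2 - 2 * av (x, d)) := by
          rcases hdisj with ⟨-, h⟩ | ⟨hltc, -, -⟩
          · exact h
          · omega
        have heqn' : Kv p k * Dv p (x', d') ^ 2
            = 3 * p * Xv p n k (x', d') ^ 2 + 2 ^ (2 - 2 * av (x, d)) := by
          rcases hdisj' with ⟨-, h⟩ | ⟨hltc, -, -⟩
          · rw [havEq] at h
            exact h
          · rw [hevEq] at hltc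
            omega
        have h1Z : (Kv p k : ℤ) * (Dv p (x, d) : ℤ) ^ 2
            = 3 * (p : ℤ) * (Xv p n k (x, d) : ℤ) ^ 2 + 2 ^ (2 - 2 * av (x, d)) := by
          exact_mod_cast heqn
        have h2Z : (Kv p k : ℤ) * (Dv p (x', d') : ℤ) ^ 2
            = 3 * (p : ℤ) * (Xv p n k (x', d') : ℤ) ^ 2 + 2 ^ (2 - 2 * av (x, d)) := by
          exact_mod_cast heqn'
        have hZ := growth_lemma (Kv p k : ℤ) (3 * (p : ℤ)) 1 (2 ^ (2 - 2 * av (x, d)))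
          (Xv p n k (x, d) : ℤ) (Dv p (x, d) : ℤ) (Xv p n k (x', d') : ℤ) (Dv p (x', d') : ℤ)
          hKZ (helper_3p _ hp5Z) le_rfl hc1
          (helper_co_special _ _ _ hp5Z hKZ hc1 hc2)
          h1Z h2Z hDZlt hXZ hXZ' hDZ1 (one_dvd _)
        apply hfinish
        exact_mod_cast hZ
      · -- generic case
        have htlt : tv p k < ev p n (x, d) := by
          rcases hdisj with ⟨hcc, -⟩ | ⟨hltc, -, -⟩
          · exact absurd hcc hc
          · exact hltc
        have hE1 : 1 ≤ ev p n (x, d) - tv p k := by omega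
        -- the equations in generic form
        have heqn : Kv p k * Dv p (x, d) ^ 2 = 3 * Xv p n k (x, d) ^ 2
            + 2 ^ (2 - 2 * av (x, d)) * p ^ (ev p n (x, d) - tv p k) := by
          rcases hdisj with ⟨hcc, -⟩ | ⟨-, -, h⟩
          · exact absurd hcc hc
          · exact h
        have hpX : ¬ p ∣ Xv p n k (x, d) := by
          rcases hdisj with ⟨hcc, -⟩ | ⟨-, h, -⟩
          · exact absurd hcc hc
          · exact h
        have heqn' : Kv p k * Dv p (x', d') ^ 2 = 3 * Xv p n k (x', d') ^ 2
            + 2 ^ (2 - 2 * av (x, d)) * p ^ (ev p n (x, d) - tv p k) := by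
          rcases hdisj' with ⟨hcc, -⟩ | ⟨-, -, h⟩
          · rw [hevEq] at hcc
            exact absurd hcc hc
          · rw [havEq, hevEq] at h
            exact h
        have hpX' : ¬ p ∣ Xv p n k (x', d') := by
          rcases hdisj' with ⟨hcc, -⟩ | ⟨-, h, -⟩
          · rw [hevEq] at hcc
            exact absurd hcc hc
          · exact h
        -- the reference element
        have hrG := hs0mem (x, d) hsT
        have hrT : (x0 (x, d), d0 (x, d)) ∈ T := by
          rw [hGrpDef] at hrG
          exact mem_of_mem_filter _ hrG
        have hravbv : av (x0 (x, d), d0 (x, d)) = av (x, d) ∧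
            bv p (x0 (x, d), d0 (x, d)) = bv p (x, d) := by
          rw [hGrpDef] at hrG
          exact (mem_filter.mp hrG).2
        obtain ⟨hrav, hrbv⟩ := hravbv
        obtain ⟨hr1, hr2, hr3, hr4⟩ := hTmem _ hrT
        obtain ⟨-, -, -, -, hXr1, hDr1, -, hpDr, hdisjr⟩ :=
          key_struct p n k (x0 (x, d)) (d0 (x, d)) hp hp5 hk hr1 hr2 hr3
        have hrevEq : ev p n (x0 (x, d), d0 (x, d)) = ev p n (x, d) := by
          unfold ev
          rw [hrbv]
        have heqnr : Kv p k * Dv p (x0 (x, d), d0 (x, d)) ^ 2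
            = 3 * Xv p n k (x0 (x, d), d0 (x, d)) ^ 2
              + 2 ^ (2 - 2 * av (x, d)) * p ^ (ev p n (x, d) - tv p k) := by
          rcases hdisjr with ⟨hcc, -⟩ | ⟨-, -, h⟩
          · rw [hrevEq] at hcc
            exact absurd hcc hc
          · rw [hrav, hrevEq] at h
            exact h
        have hpXr : ¬ p ∣ Xv p n k (x0 (x, d), d0 (x, d)) := by
          rcases hdisjr with ⟨hcc, -⟩ | ⟨-, h, -⟩
          · rw [hrevEq] at hcc
            exact absurd hcc hc
          · exact h
        -- dichotomies
        have hdich := pair_cases p hp hp5 (Kv p k) (2 - 2 * av (x, d))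
          (ev p n (x, d) - tv p k) hE1
          (Xv p n k (x0 (x, d), d0 (x, d))) (Dv p (x0 (x, d), d0 (x, d)))
          (Xv p n k (x, d)) (Dv p (x, d)) hpXr hpX hpDr hpD heqnr heqn
        have hdich' := pair_cases p hp hp5 (Kv p k) (2 - 2 * av (x, d))
          (ev p n (x, d) - tv p k) hE1
          (Xv p n k (x0 (x, d), d0 (x, d))) (Dv p (x0 (x, d), d0 (x, d)))
          (Xv p n k (x', d')) (Dv p (x', d')) hpXr hpX' hpDr hpD' heqnr heqn'
        -- reference elements agree for s and s'
        have hGrpEq : Grp (x, d) = Grp (x', d') := by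
          rw [hGrpDef]
          apply filter_congr
          intro u _
          rw [hav, hbv]
        have hd0Eq : d0 (x', d') = d0 (x, d) := by
          rw [hd0def]
          dsimp only
          rw [hGrpEq]
        have hx0Eq : x0 (x', d') = x0 (x, d) := by
          rw [hx0def]
          dsimp only
          rw [hd0Eq]
        -- tags
        have htg : tag (x, d) = if (p : ℤ) ^ (ev p n (x, d) - tv p k) ∣
            ((Dv p (x0 (x, d), d0 (x, d)) : ℤ) * (Xv p n k (x, d) : ℤ)
              - (Xv p n k (x0 (x, d), d0 (x, d)) : ℤ) * (Dv p (x, d) : ℤ)) then 2 else 3 := by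
          rw [htagdef]
          dsimp only
          rw [if_neg hc]
        have htg' : tag (x', d') = if (p : ℤ) ^ (ev p n (x, d) - tv p k) ∣
            ((Dv p (x0 (x, d), d0 (x, d)) : ℤ) * (Xv p n k (x', d') : ℤ)
              - (Xv p n k (x0 (x, d), d0 (x, d)) : ℤ) * (Dv p (x', d') : ℤ)) then 2 else 3 := by
          rw [htagdef]
          dsimp only
          rw [hx0Eq, hd0Eq, hevEq, if_neg hc]
        -- within-class divisibility
        have hpDrZ : ¬ (p : ℤ) ∣ (Dv p (x0 (x, d), d0 (x, d)) : ℤ) := by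
          intro hh
          exact hpDr (by exact_mod_cast hh)
        have hcopr : IsCoprime ((p : ℤ) ^ (ev p n (x, d) - tv p k))
            ((Dv p (x0 (x, d), d0 (x, d)) : ℤ)) :=
          IsCoprime.pow_left (((Nat.prime_iff_prime_int.mp hp).coprime_iff_not_dvd).mpr hpDrZ)
        have hkey : (p : ℤ) ^ (ev p n (x, d) - tv p k) ∣
            ((Dv p (x, d) : ℤ) * (Xv p n k (x', d') : ℤ)
              - (Xv p n k (x, d) : ℤ) * (Dv p (x', d') : ℤ)) := by
          by_cases hcnd : (p : ℤ) ^ (ev p n (x, d) - tv p k) ∣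
              ((Dv p (x0 (x, d), d0 (x, d)) : ℤ) * (Xv p n k (x, d) : ℤ)
                - (Xv p n k (x0 (x, d), d0 (x, d)) : ℤ) * (Dv p (x, d) : ℤ))
          · -- v-type class
            have hcnd' : (p : ℤ) ^ (ev p n (x, d) - tv p k) ∣
                ((Dv p (x0 (x, d), d0 (x, d)) : ℤ) * (Xv p n k (x', d') : ℤ)
                  - (Xv p n k (x0 (x, d), d0 (x, d)) : ℤ) * (Dv p (x', d') : ℤ)) := by
              by_contra hno
              rw [htg, if_pos hcnd] at htageq
              rw [htg', if_neg hno] at htageq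
              omega
            have hid : (Dv p (x0 (x, d), d0 (x, d)) : ℤ) *
                ((Dv p (x, d) : ℤ) * (Xv p n k (x', d') : ℤ)
                  - (Xv p n k (x, d) : ℤ) * (Dv p (x', d') : ℤ))
                = (Dv p (x, d) : ℤ) *
                    ((Dv p (x0 (x, d), d0 (x, d)) : ℤ) * (Xv p n k (x', d') : ℤ)
                      - (Xv p n k (x0 (x, d), d0 (x, d)) : ℤ) * (Dv p (x', d') : ℤ))
                  - (Dv p (x', d') : ℤ) *
                    ((Dv p (x0 (x, d), d0 (x, d)) : ℤ) * (Xv p n k (x, d) : ℤ)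
                      - (Xv p n k (x0 (x, d), d0 (x, d)) : ℤ) * (Dv p (x, d) : ℤ)) := by
              ring
            have hdvd2 : (p : ℤ) ^ (ev p n (x, d) - tv p k) ∣
                (Dv p (x0 (x, d), d0 (x, d)) : ℤ) *
                  ((Dv p (x, d) : ℤ) * (Xv p n k (x', d') : ℤ)
                    - (Xv p n k (x, d) : ℤ) * (Dv p (x', d') : ℤ)) := by
              rw [hid]
              exact dvd_sub (Dvd.dvd.mul_left hcnd' _) (Dvd.dvd.mul_left hcnd _)
            exact hcopr.dvd_of_dvd_mul_left hdvd2
          · -- w-type class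
            have hw : (p : ℤ) ^ (ev p n (x, d) - tv p k) ∣
                ((Dv p (x0 (x, d), d0 (x, d)) : ℤ) * (Xv p n k (x, d) : ℤ)
                  + (Xv p n k (x0 (x, d), d0 (x, d)) : ℤ) * (Dv p (x, d) : ℤ)) := by
              rcases hdich with h | h
              · exact absurd h hcnd
              · exact h
            have hcnd'no : ¬ (p : ℤ) ^ (ev p n (x, d) - tv p k) ∣
                ((Dv p (x0 (x, d), d0 (x, d)) : ℤ) * (Xv p n k (x', d') : ℤ)
                  - (Xv p n k (x0 (x, d), d0 (x, d)) : ℤ) * (Dv p (x', d') : ℤ)) := by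
              intro hyes
              rw [htg, if_neg hcnd] at htageq
              rw [htg', if_pos hyes] at htageq
              omega
            have hw' : (p : ℤ) ^ (ev p n (x, d) - tv p k) ∣
                ((Dv p (x0 (x, d), d0 (x, d)) : ℤ) * (Xv p n k (x', d') : ℤ)
                  + (Xv p n k (x0 (x, d), d0 (x, d)) : ℤ) * (Dv p (x', d') : ℤ)) := by
              rcases hdich' with h | h
              · exact absurd h hcnd'no
              · exact h
            have hid : (Dv p (x0 (x, d), d0 (x, d)) : ℤ) *
                ((Dv p (x, d) : ℤ) * (Xv p n k (x', d') : ℤ)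
                  - (Xv p n k (x, d) : ℤ) * (Dv p (x', d') : ℤ))
                = (Dv p (x, d) : ℤ) *
                    ((Dv p (x0 (x, d), d0 (x, d)) : ℤ) * (Xv p n k (x', d') : ℤ)
                      + (Xv p n k (x0 (x, d), d0 (x, d)) : ℤ) * (Dv p (x', d') : ℤ))
                  - (Dv p (x', d') : ℤ) *
                    ((Dv p (x0 (x, d), d0 (x, d)) : ℤ) * (Xv p n k (x, d) : ℤ)
                      + (Xv p n k (x0 (x, d), d0 (x, d)) : ℤ) * (Dv p (x, d) : ℤ)) := by
              ring
            have hdvd2 : (p : ℤ) ^ (ev p n (x, d) - tv p k) ∣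
                (Dv p (x0 (x, d), d0 (x, d)) : ℤ) *
                  ((Dv p (x, d) : ℤ) * (Xv p n k (x', d') : ℤ)
                    - (Xv p n k (x, d) : ℤ) * (Dv p (x', d') : ℤ)) := by
              rw [hid]
              exact dvd_sub (Dvd.dvd.mul_left hw' _) (Dvd.dvd.mul_left hw _)
            exact hcopr.dvd_of_dvd_mul_left hdvd2
        -- apply the growth lemma
        have hpE1 : (1 : ℤ) ≤ (p : ℤ) ^ (ev p n (x, d) - tv p k) := by
          calc (1 : ℤ) = 1 ^ (ev p n (x, d) - tv p k) := (one_pow _).symm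
            _ ≤ (p : ℤ) ^ (ev p n (x, d) - tv p k) :=
                pow_le_pow_left₀ zero_le_one (by linarith) _
        have hpE0 : (0 : ℤ) ≤ (p : ℤ) ^ (ev p n (x, d) - tv p k) := by positivity
        have h1Z : (Kv p k : ℤ) * (Dv p (x, d) : ℤ) ^ 2
            = 3 * (Xv p n k (x, d) : ℤ) ^ 2
              + 2 ^ (2 - 2 * av (x, d)) * (p : ℤ) ^ (ev p n (x, d) - tv p k) := by
          exact_mod_cast heqn
        have h2Z : (Kv p k : ℤ) * (Dv p (x', d') : ℤ) ^ 2
            = 3 * (Xv p n k (x', d') : ℤ) ^ 2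
              + 2 ^ (2 - 2 * av (x, d)) * (p : ℤ) ^ (ev p n (x, d) - tv p k) := by
          exact_mod_cast heqn'
        have hNpos : (1 : ℤ) ≤ 2 ^ (2 - 2 * av (x, d)) * (p : ℤ) ^ (ev p n (x, d) - tv p k) :=
          helper_one_le_mul _ _ hc1 hpE1
        have hcobig : 3 * (2 ^ (2 - 2 * av (x, d)) * (p : ℤ) ^ (ev p n (x, d) - tv p k)) ^ 2
            ≤ 16 * 3 * ((p : ℤ) ^ (ev p n (x, d) - tv p k)) ^ 2 * (Kv p k : ℤ) :=
          helper_co_generic _ _ _ hKZ hc1 hc2 hpE0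
        have hZ := growth_lemma (Kv p k : ℤ) 3 ((p : ℤ) ^ (ev p n (x, d) - tv p k))
          (2 ^ (2 - 2 * av (x, d)) * (p : ℤ) ^ (ev p n (x, d) - tv p k))
          (Xv p n k (x, d) : ℤ) (Dv p (x, d) : ℤ) (Xv p n k (x', d') : ℤ) (Dv p (x', d') : ℤ)
          hKZ (by norm_num) hpE1 hNpos hcobig h1Z h2Z hDZlt hXZ hXZ' hDZ1 hkey
        apply hfinish
        exact_mod_cast hZ
    -- snd determines fst
    have hsndinj : ∀ s ∈ T, ∀ s' ∈ T, s.2 = s'.2 → s = s' := by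
      intro s hs s' hs' h2
      obtain ⟨_, _, h3, _⟩ := hTmem s hs
      obtain ⟨_, _, h3', _⟩ := hTmem s' hs'
      rw [h2] at h3
      have hx2 : s.1 ^ 2 = s'.1 ^ 2 := by omega
      have hx : s.1 = s'.1 := Nat.pow_left_injective (by norm_num) hx2
      exact Prod.ext hx h2
    -- fiber bound
    have hfiber : ∀ φ : ℕ × ℕ × ℕ,
        (((T.filter (fun s => Φ s = φ)).card : ℝ)) ≤ 8 * Real.log y := by
      intro φ
      set Fb := T.filter (fun s => Φ s = φ) with hFbdef
      have hFbT : Fb ⊆ T := filter_subset _ _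
      have hinj : Set.InjOn Prod.snd (Fb : Set (ℕ × ℕ)) := by
        intro s hs s' hs' h2
        exact hsndinj s (hFbT (mem_coe.mp hs)) s' (hFbT (mem_coe.mp hs')) h2
      have hcardeq : (Fb.image Prod.snd).card = Fb.card := card_image_of_injOn hinj
      rw [← hcardeq]
      apply chain_card y hy
      · intro a ha
        obtain ⟨s, hsFb, hsnd⟩ := mem_image.mp ha
        obtain ⟨_, h2, _, _⟩ := hTmem s (hFbT hsFb)
        omega
      · intro a ha
        obtain ⟨s, hsFb, hsnd⟩ := mem_image.mp ha
        obtain ⟨_, _, _, h4⟩ := hTmem s (hFbT hsFb)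
        have hd2k : (s.2 : ℝ) ^ 2 ≤ ((s.2 ^ 2 * k : ℕ) : ℝ) := by
          push_cast
          exact helper_d2k _ _ (by exact_mod_cast hk)
        rw [← hsnd]
        exact hd2k.trans h4
      · intro a ha b hb hab
        obtain ⟨s, hsFb, hsnd⟩ := mem_image.mp ha
        obtain ⟨s', hs'Fb, hsnd'⟩ := mem_image.mp hb
        have hφ : Φ s = Φ s' := by
          have h1 := (mem_filter.mp hsFb).2
          have h2 := (mem_filter.mp hs'Fb).2
          rw [h1, h2]
        rw [← hsnd, ← hsnd']
        apply hgrow s (hFbT hsFb) s' (hFbT hs'Fb) hφ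
        omega
    -- image bound
    have himage : ((T.image Φ).card : ℝ) ≤ 8 * ((n : ℝ) + 1) := by
      have hsub : T.image Φ ⊆ range 2 ×ˢ (range (n + 1) ×ˢ range 4) := by
        intro φ hφ
        obtain ⟨s, hsT, hφeq⟩ := mem_image.mp hφ
        obtain ⟨x, d⟩ := s
        obtain ⟨h1, h2, h3, h4⟩ := hTmem (x, d) hsT
        obtain ⟨hA1, hBn, -, -, -, -, -, -, -⟩ :=
          key_struct p n k x d hp hp5 hk h1 h2 h3
        have htag4 : tag (x, d) < 4 := by
          rw [htagdef]
          dsimp only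
          split_ifs <;> norm_num
        rw [← hφeq]
        simp only [hPhidef]
        refine mem_product.mpr ⟨mem_range.mpr ?_, mem_product.mpr ⟨mem_range.mpr ?_, mem_range.mpr ?_⟩⟩
        · show av (x, d) < 2
          omega
        · show bv p (x, d) < n + 1
          omega
        · show tag (x, d) < 4
          exact htag4
      have hcardle := card_le_card hsub
      rw [card_product, card_product, card_range, card_range, card_range] at hcardle
      calc ((T.image Φ).card : ℝ) ≤ ((2 * ((n + 1) * 4) : ℕ) : ℝ) := by exact_mod_cast hcardle
        _ = 8 * ((n : ℝ) + 1) := by push_cast; ring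
    -- put everything together
    have hcardsum : T.card = ∑ φ ∈ T.image Φ, (T.filter (fun s => Φ s = φ)).card :=
      card_eq_sum_card_fiberwise (fun s hs => mem_image_of_mem Φ hs)
    calc (T.card : ℝ) = ∑ φ ∈ T.image Φ, ((T.filter (fun s => Φ s = φ)).card : ℝ) := by
          rw [hcardsum]
          push_cast
          rfl
      _ ≤ ∑ φ ∈ T.image Φ, (8 * Real.log y) := by
          apply Finset.sum_le_sum
          intro φ _
          exact hfiber φ
      _ = ((T.image Φ).card : ℝ) * (8 * Real.log y) := by
          rw [Finset.sum_const, nsmul_eq_mul]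
      _ ≤ (8 * ((n : ℝ) + 1)) * (8 * Real.log y) := by
          apply mul_le_mul_of_nonneg_right himage
          positivity
      _ = 64 * (((n : ℝ) + 1) * Real.log y) := by ring
      _ ≤ 64 * (Real.log y * Real.log y) := by
          apply mul_le_mul_of_nonneg_left _ (by norm_num)
          apply mul_le_mul_of_nonneg_right hnlog
          linarith
      _ ≤ 100 * Real.log y ^ 2 := by nlinarith [sq_nonneg (Real.log y)]
  calc (Nat.card {xd : ℕ × ℕ // 1 ≤ xd.1 ∧ 1 ≤ xd.2 ∧
            3 * xd.1 ^ 2 + 4 * p ^ (2 * n + 1) = xd.2 ^ 2 * k ∧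
            ((xd.2 ^ 2 * k : ℕ) : ℝ) ≤ y} : ℝ)
      = (T.card : ℝ) := by rw [← hcardT]
    _ ≤ 100 * Real.log y ^ 2 := hgoal
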